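/- For a connected undirected weighted graph G with Laplacian L, the disagreement D = x̂ᵀ L x̂ of the steady state x̂ of the two-leader French-DeGroot model with leaders s₀ (opinion 0) and s₁ (opinion 1) equals 1/(b_{s₁,s₀}ᵀ L⁺ b_{s₁,s₀}), i.e., the reciprocal of the effective resistance between s₁ and s₀. -/

import Mathlib

open Matrix

noncomputable section

/-- Moore–Penrose pseudoinverse conditions. -/
def IsMoorePenrose {V : Type*} [Fintype V] [DecidableEq V]
    (L Lp : Matrix V V ℝ) : Prop :=
  L * Lp * L = L ∧ Lp * L * Lp = Lp ∧ (L * Lp)ᵀ = L * Lp ∧ (Lp * L)ᵀ = Lp * L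

/-- Laplacian of a weighted graph given by weight function `w`. -/
def lapOf {V : Type*} [Fintype V] [DecidableEq V] (w : V → V → ℝ) : Matrix V V ℝ :=
  Matrix.of fun i j => if i = j then ∑ k, w i k else - w i j

/-- The vector `e_u - e_v`. -/
def bvec {V : Type*} [DecidableEq V] (u v : V) : V → ℝ :=
  Pi.single u 1 - Pi.single v 1

lemma mp_unique {V : Type*} [Fintype V] [DecidableEq V] {L A B : Matrix V V ℝ}
    (hA : IsMoorePenrose L A) (hB : IsMoorePenrose L B) : A = B := by
  obtain ⟨hA1, hA2, hA3, hA4⟩ := hA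
  obtain ⟨hB1, hB2, hB3, hB4⟩ := hB
  have hLA : L * A = L * B := by
    calc L * A = Aᵀ * Lᵀ := by rw [← transpose_mul, hA3]
    _ = Aᵀ * (L * B * L)ᵀ := by rw [hB1]
    _ = (L * A)ᵀ * (L * B)ᵀ := by simp only [transpose_mul, Matrix.mul_assoc]
    _ = (L * A) * (L * B) := by rw [hA3, hB3]
    _ = (L * A * L) * B := by simp only [Matrix.mul_assoc]
    _ = L * B := by rw [hA1]
  have hAL : A * L = B * L := by
    calc A * L = Lᵀ * Aᵀ := by rw [← transpose_mul, hA4]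
    _ = (L * B * L)ᵀ * Aᵀ := by rw [hB1]
    _ = (B * L)ᵀ * (A * L)ᵀ := by simp only [transpose_mul, Matrix.mul_assoc]
    _ = (B * L) * (A * L) := by rw [hB4, hA4]
    _ = B * (L * A * L) := by simp only [Matrix.mul_assoc]
    _ = B * L := by rw [hA1]
  calc A = A * L * A := hA2.symm
  _ = (B * L) * A := by rw [hAL]
  _ = B * (L * A) := by rw [Matrix.mul_assoc]
  _ = B * (L * B) := by rw [hLA]
  _ = B * L * B := by rw [Matrix.mul_assoc]
  _ = B := hB2

lemma mp_transpose {V : Type*} [Fintype V] [DecidableEq V] {L A : Matrix V V ℝ}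
    (hL : Lᵀ = L) (hA : IsMoorePenrose L A) : IsMoorePenrose L Aᵀ := by
  obtain ⟨h1, h2, h3, h4⟩ := hA
  refine ⟨?_, ?_, ?_, ?_⟩
  · calc L * Aᵀ * L = (Lᵀ * A * Lᵀ)ᵀ := by
          simp only [transpose_mul, transpose_transpose, Matrix.mul_assoc]
      _ = (L * A * L)ᵀ := by rw [hL]
      _ = Lᵀ := by rw [h1]
      _ = L := hL
  · calc Aᵀ * L * Aᵀ = (A * Lᵀ * A)ᵀ := by
          simp only [transpose_mul, transpose_transpose, Matrix.mul_assoc]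
      _ = (A * L * A)ᵀ := by rw [hL]
      _ = Aᵀ := by rw [h2]
  · have e : L * Aᵀ = (A * L)ᵀ := by rw [transpose_mul, hL]
    rw [e, transpose_transpose]; exact h4.symm
  · have e : Aᵀ * L = (L * A)ᵀ := by rw [transpose_mul, hL]
    rw [e, transpose_transpose]; exact h3.symm

theorem disagreement_eq_inv_resistance {n : ℕ}
    (w : Fin n → Fin n → ℝ) (L Lp : Matrix (Fin n) (Fin n) ℝ)
    (hw0 : ∀ i, w i i = 0) (hwsymm : ∀ i j, w i j = w j i) (hwnn : ∀ i j, 0 ≤ w i j)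
    (hL : L = lapOf w)
    (hconn : ∀ x : Fin n → ℝ, L *ᵥ x = 0 → ∃ c : ℝ, x = fun _ => c)
    (hMP : IsMoorePenrose L Lp)
    (s0 s1 : Fin n) (hs : s0 ≠ s1)
    (xhat : Fin n → ℝ)
    (hx : xhat = fun v =>
      (bvec v s0 ⬝ᵥ Lp *ᵥ bvec s1 s0) / (bvec s1 s0 ⬝ᵥ Lp *ᵥ bvec s1 s0)) :
    xhat ⬝ᵥ L *ᵥ xhat = 1 / (bvec s1 s0 ⬝ᵥ Lp *ᵥ bvec s1 s0) := by
  have hLsym : Lᵀ = L := by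
    subst hL
    ext i j
    simp only [transpose_apply, lapOf, Matrix.of_apply]
    by_cases h : i = j
    · simp [h]
    · simp [h, Ne.symm h, hwsymm j i]
  have hL1 : L *ᵥ (fun _ => (1:ℝ)) = 0 := by
    subst hL
    funext i
    simp only [mulVec, dotProduct, lapOf, Matrix.of_apply, mul_one, Pi.zero_apply]
    have key : ∀ j : Fin n, (if i = j then (∑ k, w i k) else -w i j)
        = (if i = j then (∑ k, w i k) else 0) - w i j := by
      intro j
      by_cases h : i = j
      · subst h; simp [hw0]
      · simp [h]
    rw [Finset.sum_congr rfl (fun j _ => key j), Finset.sum_sub_distrib]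
    simp
  have hLpsym : Lpᵀ = Lp := mp_unique (mp_transpose hLsym hMP) hMP
  obtain ⟨hM1, hM2, hM3, hM4⟩ := hMP
  set b : Fin n → ℝ := bvec s1 s0 with hb
  set y : Fin n → ℝ := Lp *ᵥ b with hy
  set r : ℝ := b ⬝ᵥ y with hr
  have hsingle : ∀ (u : Fin n), (Pi.single u 1 : Fin n → ℝ) ⬝ᵥ y = y u := by
    intro u
    simp [dotProduct, Pi.single_apply, ite_mul]
  have hxv : xhat = fun v => (y v - y s0) * r⁻¹ := by
    funext v
    rw [hx]
    show (bvec v s0 ⬝ᵥ y) / r = _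
    rw [div_eq_mul_inv]
    congr 1
    rw [bvec, sub_dotProduct, hsingle, hsingle]
  by_cases hr0 : r = 0
  · have hz : xhat = 0 := by rw [hxv, hr0]; funext v; simp
    rw [hz]
    show (0 : Fin n → ℝ) ⬝ᵥ L *ᵥ 0 = 1 / r
    rw [hr0]
    simp
  · have hxs : xhat = r⁻¹ • (y - (y s0) • (fun _ => (1:ℝ))) := by
      rw [hxv]; funext v
      simp only [Pi.smul_apply, Pi.sub_apply, smul_eq_mul]
      ring
    have hmv : L *ᵥ xhat = r⁻¹ • (L *ᵥ y) := by
      rw [hxs, Matrix.mulVec_smul, Matrix.mulVec_sub, Matrix.mulVec_smul, hL1]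
      simp
    have hvm1 : (fun _ => (1:ℝ)) ᵥ* L = 0 := by
      rw [show L = Lᵀ from hLsym.symm, Matrix.vecMul_transpose]; exact hL1
    have hone : (fun _ => (1:ℝ)) ⬝ᵥ (L *ᵥ y) = 0 := by
      rw [Matrix.dotProduct_mulVec, hvm1, zero_dotProduct]
    have hyLy : y ⬝ᵥ (L *ᵥ y) = r := by
      calc y ⬝ᵥ (L *ᵥ y) = (b ᵥ* Lpᵀ) ⬝ᵥ (L *ᵥ y) := by rw [Matrix.vecMul_transpose, ← hy]
      _ = b ⬝ᵥ (Lpᵀ *ᵥ (L *ᵥ y)) := (Matrix.dotProduct_mulVec b Lpᵀ (L *ᵥ y)).symm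
      _ = b ⬝ᵥ (Lp *ᵥ (L *ᵥ (Lp *ᵥ b))) := by rw [hLpsym, hy]
      _ = b ⬝ᵥ ((Lp * L * Lp) *ᵥ b) := by
          rw [Matrix.mulVec_mulVec, Matrix.mulVec_mulVec]
      _ = b ⬝ᵥ (Lp *ᵥ b) := by rw [hM2]
      _ = r := by rw [hr, hy]
    rw [hmv, hxs]
    rw [smul_dotProduct, dotProduct_smul, sub_dotProduct,
      smul_dotProduct, hyLy, hone]
    show r⁻¹ * (r⁻¹ * (r - y s0 * 0)) = 1 / r
    field_simp
    ring
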